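/- Let M be a nonzero maximal subalgebra of the Lie algebra W_n with rk_A(M) < n, i.e., any n elements of M are linearly dependent over A. Then the only ideals I of A satisfying D(I) ⊆ I for all D ∈ M are the zero ideal and A itself. -/

import Mathlib

open MvPolynomial

/-- `Wn K n` is the Lie algebra of all `K`-derivations of `K[x_1, …, x_n]`. -/
abbrev Wn (K : Type) [Field K] (n : ℕ) :=
  Derivation K (MvPolynomial (Fin n) K) (MvPolynomial (Fin n) K)


lemma coeff_pderiv_aux {K : Type} [CommSemiring K] {n : ℕ}
    (i : Fin n) (m : Fin n →₀ ℕ) (f : MvPolynomial (Fin n) K) :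
    coeff m (pderiv i f) = coeff (m + Finsupp.single i 1) f * (m i + 1 : ℕ) := by
  induction f using MvPolynomial.induction_on' with
  | monomial s a =>
    rw [pderiv_monomial, coeff_monomial, coeff_monomial]
    by_cases h : s i = 0
    · have hs : s ≠ m + Finsupp.single i 1 := fun he => by
        have := DFunLike.congr_fun he i
        simp [h] at this
      simp [h, hs]
    · have key : (s - Finsupp.single i 1 = m) ↔ (s = m + Finsupp.single i 1) := by
        constructor
        · intro hc; ext j
          rw [← hc, Finsupp.add_apply, Finsupp.tsub_apply, Finsupp.single_apply]
          by_cases hj : i = j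
          · subst hj; simp; omega
          · simp [hj]
        · intro hc; subst hc; ext j
          rw [Finsupp.tsub_apply, Finsupp.add_apply, Finsupp.single_apply]
          by_cases hj : i = j
          · subst hj; simp
          · simp [hj]
      by_cases he : s = m + Finsupp.single i 1
      · have hsi : s i = m i + 1 := by rw [he]; simp
        rw [if_pos (key.mpr he), if_pos he, hsi]
      · rw [if_neg (fun hc => he (key.mp hc)), if_neg he, zero_mul]
  | add p q hp hq =>
    simp [coeff_add, hp, hq, add_mul]


lemma totalDegree_pderiv_lt_aux {K : Type} [Field K] {n : ℕ}
    (i : Fin n) (f : MvPolynomial (Fin n) K) (hf : 0 < f.totalDegree) :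
    (pderiv i f).totalDegree < f.totalDegree := by
  rw [totalDegree, Finset.sup_lt_iff (by simpa using hf)]
  intro m hm
  rw [mem_support_iff, coeff_pderiv_aux] at hm
  have h1 : coeff (m + Finsupp.single i 1) f ≠ 0 := fun h => hm (by simp [h])
  have h2 := le_totalDegree (mem_support_iff.mpr h1)
  have h3 : (m + Finsupp.single i 1).sum (fun _ e => e) =
      (m.sum fun _ e => e) + 1 := by
    rw [Finsupp.sum_add_index' (fun _ => rfl) (fun _ _ _ => rfl),
      Finsupp.sum_single_index rfl]
  omega

lemma exists_pderiv_ne_zero_aux {K : Type} [Field K] [CharZero K] {n : ℕ}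
    (f : MvPolynomial (Fin n) K) (hf : f.totalDegree ≠ 0) :
    ∃ i, pderiv i f ≠ 0 := by
  by_contra h
  push_neg at h
  apply hf
  have hc : ∀ m : Fin n →₀ ℕ, m ≠ 0 → coeff m f = 0 := by
    intro m hm
    obtain ⟨i, hi⟩ : ∃ i, m i ≠ 0 := by
      by_contra h'
      push_neg at h'
      exact hm (Finsupp.ext h')
    have := coeff_pderiv_aux i (m - Finsupp.single i 1) f
    rw [h i] at this
    have hms : m - Finsupp.single i 1 + Finsupp.single i 1 = m := by
      ext j
      rw [Finsupp.add_apply, Finsupp.tsub_apply, Finsupp.single_apply]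
      by_cases hj : i = j
      · subst hj; simp; omega
      · simp [hj]
    rw [hms] at this
    simp only [coeff_zero] at this
    rcases mul_eq_zero.mp this.symm with h' | h'
    · exact h'
    · exact absurd h' (Nat.cast_ne_zero.mpr (by omega))
  rw [totalDegree_eq_zero_iff]
  intro m hm x
  by_contra hx
  exact mem_support_iff.mp hm (hc m (fun h0 => by simp [h0] at hx))

lemma ideal_pderiv_invariant_aux {K : Type} [Field K] [CharZero K] {n : ℕ}
    (I : Ideal (MvPolynomial (Fin n) K))
    (hI : ∀ (i : Fin n), ∀ f ∈ I, pderiv i f ∈ I) (hne : I ≠ ⊥) : I = ⊤ := by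
  obtain ⟨f, hfI, hf0⟩ := Submodule.exists_mem_ne_zero_of_ne_bot hne
  have key : ∀ d : ℕ, ∀ g ∈ I, g ≠ 0 → g.totalDegree ≤ d → I = ⊤ := by
    intro d
    induction d with
    | zero =>
      intro g hgI hg0 hgd
      have hC : g = C (coeff 0 g) := by
        ext m
        rw [coeff_C]
        by_cases hm : (0 : Fin n →₀ ℕ) = m
        · rw [if_pos hm, ← hm]
        · rw [if_neg hm]
          by_contra hms
          have := (totalDegree_eq_zero_iff _ g).mp (Nat.le_zero.mp hgd) m
            (mem_support_iff.mpr hms)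
          exact hm (Finsupp.ext fun j => (this j).symm)
      have hc : coeff 0 g ≠ 0 := fun h => hg0 (by rw [hC, h, map_zero])
      have : IsUnit g := by
        rw [hC]; exact IsUnit.of_mul_eq_one (C (coeff 0 g)⁻¹) (by rw [← map_mul, mul_inv_cancel₀ hc, map_one])
      exact I.eq_top_of_isUnit_mem hgI this
    | succ d ih =>
      intro g hgI hg0 hgd
      by_cases hdeg : g.totalDegree = 0
      · -- same as the zero case
        have hC : g = C (coeff 0 g) := by
          ext m
          rw [coeff_C]
          by_cases hm : (0 : Fin n →₀ ℕ) = m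
          · rw [if_pos hm, ← hm]
          · rw [if_neg hm]
            by_contra hms
            have := (totalDegree_eq_zero_iff _ g).mp hdeg m (mem_support_iff.mpr hms)
            exact hm (Finsupp.ext fun j => (this j).symm)
        have hc : coeff 0 g ≠ 0 := fun h => hg0 (by rw [hC, h, map_zero])
        have hu : IsUnit g := by
          rw [hC]; exact IsUnit.of_mul_eq_one (C (coeff 0 g)⁻¹) (by rw [← map_mul, mul_inv_cancel₀ hc, map_one])
        exact I.eq_top_of_isUnit_mem hgI hu
      · obtain ⟨i, hi⟩ := exists_pderiv_ne_zero_aux g hdeg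
        exact ih (pderiv i g) (hI i g hgI) hi
          (by have := totalDegree_pderiv_lt_aux i g (Nat.pos_of_ne_zero hdeg); omega)
  exact key f.totalDegree f hfI hf0 le_rfl


lemma derivation_sum_apply {R A M ι : Type*} [CommSemiring R] [CommSemiring A]
    [Algebra R A] [AddCommMonoid M] [Module A M] [Module R M]
    (s : Finset ι) (D : ι → Derivation R A M) (a : A) :
    (∑ i ∈ s, D i) a = ∑ i ∈ s, D i a := by
  classical
  induction s using Finset.induction with
  | empty => simp
  | insert _ _ h ih => rw [Finset.sum_insert h, Finset.sum_insert h, Derivation.add_apply, ih]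


/-- If `M` is a nonzero maximal Lie subalgebra of `Wn` of rank `< n` over
`A = K[x_1,…,x_n]` (i.e. any `n` of its elements are `A`-linearly dependent),
then the only ideals of `A` invariant under every derivation in `M` are `0` and `A`. -/
theorem maximal_subalgebra_rank_lt_no_invariant_ideals
    {K : Type} [Field K] [IsAlgClosed K] [CharZero K] {n : ℕ}
    (M : LieSubalgebra K (Wn K n))
    (hM0 : M ≠ ⊥) (hMtop : M ≠ ⊤)
    (hmax : ∀ L : LieSubalgebra K (Wn K n), M < L → L = ⊤)
    (hrk : ∀ v : Fin n → Wn K n, (∀ i, v i ∈ M) →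
      ¬ LinearIndependent (MvPolynomial (Fin n) K) v)
    (I : Ideal (MvPolynomial (Fin n) K))
    (hI : ∀ D ∈ M, ∀ f ∈ I, D f ∈ I) :
    I = ⊥ ∨ I = ⊤ := by
  classical
  set A := MvPolynomial (Fin n) K
  -- the stabilizer subalgebra of I
  let L : LieSubalgebra K (Wn K n) :=
    { carrier := {D | ∀ f ∈ I, D f ∈ I}
      add_mem' := fun {D1 D2} h1 h2 f hf => by
        rw [Derivation.add_apply]; exact I.add_mem (h1 f hf) (h2 f hf)
      zero_mem' := fun f hf => by simp only [Derivation.zero_apply]; exact I.zero_mem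
      smul_mem' := fun c D hD f hf => by
        rw [Derivation.smul_apply, ← algebraMap_smul A c (D f)]
        exact I.smul_mem _ (hD f hf)
      lie_mem' := fun {D1 D2} h1 h2 f hf => by
        rw [Derivation.commutator_apply]
        exact I.sub_mem (h1 _ (h2 f hf)) (h2 _ (h1 f hf)) }
  have hML : M ≤ L := fun D hD => hI D hD
  by_cases hLtop : (L : LieSubalgebra K (Wn K n)) = ⊤
  · -- every derivation preserves I
    rcases eq_or_ne I ⊥ with h | h
    · exact Or.inl h
    · refine Or.inr (ideal_pderiv_invariant_aux I (fun i f hf => ?_) h)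
      have : (pderiv i : Wn K n) ∈ L := hLtop ▸ LieSubalgebra.mem_top _
      exact this f hf
  · -- then L = M, and I must be ⊥
    have hLM : L = M := by
      by_contra hne
      exact hLtop (hmax L (lt_of_le_of_ne hML (fun h => hne h.symm)))
    left
    by_contra hne
    obtain ⟨g, hgI, hg0⟩ := Submodule.exists_mem_ne_zero_of_ne_bot hne
    apply hrk (fun i => g • (pderiv i : Wn K n))
    · intro i
      rw [← hLM]
      intro f hf
      rw [Derivation.smul_apply, smul_eq_mul]
      exact I.mul_mem_right _ hgI
    · rw [Fintype.linearIndependent_iff]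
      intro c hc j
      have happ : (∑ i, c i • (g • (pderiv i : Wn K n))) (X j) = 0 := by
        rw [hc]; rfl
      have hsum : (∑ i, c i • (g • (pderiv i : Wn K n))) (X j)
          = ∑ i, (c i * g) * (pderiv i (X j) : A) := by
        rw [derivation_sum_apply]
        refine Finset.sum_congr rfl fun i _ => ?_
        rw [Derivation.smul_apply, Derivation.smul_apply, smul_eq_mul, smul_eq_mul,
          mul_assoc]
      rw [hsum, Finset.sum_eq_single j (fun i _ hij => by
          rw [pderiv_X_of_ne (Ne.symm hij), mul_zero])
        (fun h => absurd (Finset.mem_univ j) h), pderiv_X_self, mul_one] at happ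
      rcases mul_eq_zero.mp happ with h | h
      · exact h
      · exact absurd h hg0
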